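/- Under the hypotheses of the main theorem (Ω bounded convex, G > 0 locally integrable, f ∈ L¹ with Radon transform over Ω depending only on distance to the nearest parallel supporting hyperplane), the first-moment function g(ξ) = ∫_{ℝⁿ} ⟨x, ξ⟩ f(x) dx satisfies g(ξ) = (K/2)(r₂(ξ) + r₁(ξ)) for all unit vectors ξ, where K = ∫_Ω f and r₁(ξ), r₂(ξ) are the infimum and supremum of ⟨x,ξ⟩ over Ω. -/

import Mathlib

open MeasureTheory Set
open scoped MeasureTheory RealInnerProductSpace

variable {m : ℕ}

noncomputable section

abbrev Esp (m : ℕ) := EuclideanSpace ℝ (Fin (m+2))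
abbrev Esp' (m : ℕ) := EuclideanSpace ℝ (Fin (m+1))

def Phi (b : OrthonormalBasis (Fin (m+2)) ℝ (Esp m)) : ℝ × Esp' m ≃ᵐ Esp m :=
  ((MeasurableEquiv.refl ℝ).prodCongr ((MeasurableEquiv.toLp 2 (Fin (m+1) → ℝ)).symm)).trans
    (((MeasurableEquiv.piFinSuccAbove (fun _ : Fin (m+2) => ℝ) 0).symm).trans
      ((((MeasurableEquiv.toLp 2 (Fin (m+2) → ℝ)).symm).symm).trans
        b.repr.symm.toMeasurableEquiv))

lemma Phi_apply (b : OrthonormalBasis (Fin (m+2)) ℝ (Esp m)) (t : ℝ) (y : Esp' m) :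
    Phi b (t, y) = b.repr.symm (((MeasurableEquiv.toLp 2 (Fin (m+2) → ℝ)).symm).symm
      (Fin.insertNth 0 t (((MeasurableEquiv.toLp 2 (Fin (m+1) → ℝ)).symm) y))) := rfl

lemma Phi_mp (b : OrthonormalBasis (Fin (m+2)) ℝ (Esp m)) :
    MeasurePreserving (Phi b) volume volume := by
  have h0 : MeasurePreserving
      (⇑((MeasurableEquiv.refl ℝ).prodCongr ((MeasurableEquiv.toLp 2 (Fin (m+1) → ℝ)).symm)))
      volume volume := by
    rw [Measure.volume_eq_prod, Measure.volume_eq_prod]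
    exact (MeasurePreserving.id _).prod
      (EuclideanSpace.volume_preserving_symm_measurableEquiv_toLp (Fin (m+1)))
  have h1 : MeasurePreserving
      (⇑((MeasurableEquiv.piFinSuccAbove (fun _ : Fin (m+2) => ℝ) 0).symm)) volume volume :=
    (volume_preserving_piFinSuccAbove (fun _ : Fin (m+2) => ℝ) 0).symm _
  have h2 : MeasurePreserving (⇑(((MeasurableEquiv.toLp 2 (Fin (m+2) → ℝ)).symm).symm))
      volume volume := (EuclideanSpace.volume_preserving_symm_measurableEquiv_toLp (Fin (m+2))).symm _
  have h3 : MeasurePreserving (⇑(b.repr.symm.toMeasurableEquiv)) volume volume :=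
    b.repr.symm.measurePreserving
  exact h3.comp (h2.comp (h1.comp h0))

lemma Phi_inner {ξ : Esp m} (b : OrthonormalBasis (Fin (m+2)) ℝ (Esp m)) (hb : b 0 = ξ)
    (t : ℝ) (y : Esp' m) : ⟪Phi b (t, y), ξ⟫ = t := by
  rw [Phi_apply, ← hb, real_inner_comm, ← OrthonormalBasis.repr_apply_apply,
    LinearIsometryEquiv.apply_symm_apply]
  show Fin.insertNth (α := fun _ : Fin (m+2) => ℝ) 0 t
    (((MeasurableEquiv.toLp 2 (Fin (m+1) → ℝ)).symm) y) 0 = t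
  exact Fin.insertNth_apply_same (α := fun _ : Fin (m+2) => ℝ) 0 t
    (fun j => ((MeasurableEquiv.toLp 2 (Fin (m+1) → ℝ)).symm) y j)

lemma Phi_isometry (b : OrthonormalBasis (Fin (m+2)) ℝ (Esp m)) (t : ℝ) :
    Isometry (fun y : Esp' m => Phi b (t, y)) := by
  have : Isometry (fun w : Esp' m => (((MeasurableEquiv.toLp 2 (Fin (m+2) → ℝ)).symm).symm
      (Fin.insertNth 0 t (((MeasurableEquiv.toLp 2 (Fin (m+1) → ℝ)).symm) w)) : Esp m)) := by
    apply Isometry.of_dist_eq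
    intro y₁ y₂
    rw [EuclideanSpace.dist_eq, EuclideanSpace.dist_eq]
    congr 1
    show ∑ i : Fin (m+2), dist (Fin.insertNth (α := fun _ : Fin (m+2) => ℝ) 0 t
        (fun j => y₁ j) i) (Fin.insertNth (α := fun _ : Fin (m+2) => ℝ) 0 t (fun j => y₂ j) i)
        ^ 2 = ∑ j : Fin (m+1), dist (y₁ j) (y₂ j) ^ 2
    rw [Fin.sum_univ_succ]
    simp only [← Fin.succAbove_zero, Fin.insertNth_apply_same, Fin.insertNth_apply_succAbove]
    simp
  simp only [Phi_apply]
  exact (b.repr.symm.isometry.comp this)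

lemma Phi_range {ξ : Esp m} (b : OrthonormalBasis (Fin (m+2)) ℝ (Esp m)) (hb : b 0 = ξ)
    (t : ℝ) : Set.range (fun y : Esp' m => Phi b (t, y)) = {x : Esp m | ⟪x, ξ⟫ = t} := by
  apply Set.Subset.antisymm
  · rintro _ ⟨y, rfl⟩
    exact Phi_inner b hb t y
  · intro x hx
    have hx0 : b.repr x 0 = t := by
      rw [OrthonormalBasis.repr_apply_apply, hb, real_inner_comm]; exact hx
    refine ⟨((MeasurableEquiv.toLp 2 (Fin (m+1) → ℝ)).symm).symm
      (fun j => b.repr x (Fin.succ j)), ?_⟩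
    show Phi b (t, _) = x
    rw [Phi_apply]
    apply b.repr.injective
    rw [LinearIsometryEquiv.apply_symm_apply]
    have key : Fin.insertNth (α := fun _ : Fin (m+2) => ℝ) 0 t
        (((MeasurableEquiv.toLp 2 (Fin (m+1) → ℝ)).symm)
          (((MeasurableEquiv.toLp 2 (Fin (m+1) → ℝ)).symm).symm (fun j => b.repr x (Fin.succ j))))
        = ((MeasurableEquiv.toLp 2 (Fin (m+2) → ℝ)).symm) (b.repr x) := by
      rw [MeasurableEquiv.apply_symm_apply]
      funext i
      induction i using Fin.cases with
      | zero =>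
        rw [Fin.insertNth_apply_same]
        exact hx0.symm
      | succ j =>
        rw [← Fin.succAbove_zero, Fin.insertNth_apply_succAbove]
        rfl
    calc ((MeasurableEquiv.toLp 2 (Fin (m+2) → ℝ)).symm).symm
          (Fin.insertNth 0 t (((MeasurableEquiv.toLp 2 (Fin (m+1) → ℝ)).symm)
            (((MeasurableEquiv.toLp 2 (Fin (m+1) → ℝ)).symm).symm (fun j => b.repr x (Fin.succ j)))))
        = ((MeasurableEquiv.toLp 2 (Fin (m+2) → ℝ)).symm).symm
          (((MeasurableEquiv.toLp 2 (Fin (m+2) → ℝ)).symm) (b.repr x)) := by rw [key]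
      _ = b.repr x := MeasurableEquiv.symm_apply_apply _ _

-- Haar: μH[m+1] on Esp' m equals c • volume
lemma nu_haar (m : ℕ) : MeasureTheory.Measure.IsAddHaarMeasure
    (μH[(m+1 : ℕ)] : Measure (Esp' m)) := by
  have := MeasureTheory.isAddHaarMeasure_hausdorffMeasure (E := Esp' m)
  simpa [finrank_euclideanSpace_fin] using this

lemma nu_eq_smul (m : ℕ) : ∃ c : NNReal, 0 < c ∧
    (μH[(m+1 : ℕ)] : Measure (Esp' m)) = c • volume := by
  haveI := nu_haar m
  refine ⟨(μH[(m+1 : ℕ)] : Measure (Esp' m)).addHaarScalarFactor volume, ?_, ?_⟩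
  · exact Measure.addHaarScalarFactor_pos_of_isAddHaarMeasure _ _
  · exact Measure.isAddLeftInvariant_eq_smul _ _

-- map of hausdorff measure under slice isometry
lemma map_slice {ξ : Esp m} (b : OrthonormalBasis (Fin (m+2)) ℝ (Esp m)) (hb : b 0 = ξ) (t : ℝ) :
    Measure.map (fun y : Esp' m => Phi b (t, y)) (μH[(m+1 : ℕ)])
      = (μH[(m+1 : ℕ)] : Measure (Esp m)).restrict {x : Esp m | ⟪x, ξ⟫ = t} := by
  have hmeas : Measurable (fun y : Esp' m => Phi b (t, y)) :=
    (Phi_isometry b t).continuous.measurable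
  have hset : MeasurableSet {x : Esp m | ⟪x, ξ⟫ = t} := by
    have : IsClosed {x : Esp m | ⟪x, ξ⟫ = t} :=
      isClosed_eq (Continuous.inner continuous_id continuous_const) continuous_const
    exact this.measurableSet
  ext s hs
  rw [Measure.map_apply hmeas hs, Measure.restrict_apply hs,
    ← Isometry.hausdorffMeasure_image (Phi_isometry b t) (Or.inl (by positivity)),
    Set.image_preimage_eq_inter_range, Phi_range b hb t]

lemma slice_integral {ξ : Esp m} (b : OrthonormalBasis (Fin (m+2)) ℝ (Esp m)) (hb : b 0 = ξ)
    (Ω : Set (Esp m)) (hopen : IsOpen Ω) (f : Esp m → ℝ) (hsupp : ∀ x, x ∉ Ω → f x = 0)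
    (c : NNReal) (hc : (μH[(m+1 : ℕ)] : Measure (Esp' m)) = c • volume) (t : ℝ) :
    ∫ x in Ω ∩ {x : Esp m | ⟪x, ξ⟫ = t}, f x ∂(μH[(m+1 : ℕ)])
      = c.toReal * ∫ y : Esp' m, f (Phi b (t, y)) := by
  set H : Set (Esp m) := {x : Esp m | ⟪x, ξ⟫ = t} with hH
  set j : Esp' m → Esp m := fun y => Phi b (t, y) with hj
  have hmeas : Measurable j := (Phi_isometry b t).continuous.measurable
  have hsetH : MeasurableSet H := by
    have : IsClosed H :=
      isClosed_eq (Continuous.inner continuous_id continuous_const) continuous_const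
    exact this.measurableSet
  have hA : MeasurableSet (Ω ∩ H) := hopen.measurableSet.inter hsetH
  have hres : ((μH[(m+1 : ℕ)] : Measure (Esp m)).restrict H).restrict (Ω ∩ H)
      = (μH[(m+1 : ℕ)] : Measure (Esp m)).restrict (Ω ∩ H) := by
    rw [Measure.restrict_restrict hA, inter_eq_self_of_subset_left inter_subset_right]
  have hemb : MeasurableEmbedding j :=
    ((Phi_isometry b t).isClosedEmbedding).measurableEmbedding
  have hzero : ∀ y, y ∉ j ⁻¹' (Ω ∩ H) → f (j y) = 0 := by
    intro y hy
    apply hsupp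
    intro hmem
    exact hy ⟨hmem, Phi_inner b hb t y⟩
  calc ∫ x in Ω ∩ H, f x ∂(μH[(m+1 : ℕ)])
      = ∫ x, f x ∂(((μH[(m+1 : ℕ)] : Measure (Esp m)).restrict H).restrict (Ω ∩ H)) := by
        rw [hres]
    _ = ∫ x, f x ∂((Measure.map j (μH[(m+1 : ℕ)])).restrict (Ω ∩ H)) := by
        rw [map_slice b hb t]
    _ = ∫ x, f x ∂(Measure.map j ((μH[(m+1 : ℕ)] : Measure (Esp' m)).restrict (j ⁻¹' (Ω ∩ H)))) := by
        rw [Measure.restrict_map hmeas hA]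
    _ = ∫ y, f (j y) ∂((μH[(m+1 : ℕ)] : Measure (Esp' m)).restrict (j ⁻¹' (Ω ∩ H))) :=
        hemb.integral_map f
    _ = c.toReal * ∫ y, f (j y) := by
        rw [hc, ENNReal.smul_def, Measure.restrict_smul, integral_smul_measure,
          setIntegral_eq_integral_of_forall_compl_eq_zero hzero]
        simp [smul_eq_mul]

lemma slice_pos {ξ : Esp m} (b : OrthonormalBasis (Fin (m+2)) ℝ (Esp m)) (hb : b 0 = ξ)
    (Ω : Set (Esp m)) (hopen : IsOpen Ω)
    (c : NNReal) (hcpos : 0 < c) (hc : (μH[(m+1 : ℕ)] : Measure (Esp' m)) = c • volume) (t : ℝ)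
    (x₀ : Esp m) (hx₀ : x₀ ∈ Ω ∩ {x : Esp m | ⟪x, ξ⟫ = t}) :
    0 < (μH[(m+1 : ℕ)] : Measure (Esp m)) (Ω ∩ {x : Esp m | ⟪x, ξ⟫ = t}) := by
  set H : Set (Esp m) := {x : Esp m | ⟪x, ξ⟫ = t} with hH
  set j : Esp' m → Esp m := fun y => Phi b (t, y) with hj
  have hmeas : Measurable j := (Phi_isometry b t).continuous.measurable
  have hsetH : MeasurableSet H := by
    have : IsClosed H :=
      isClosed_eq (Continuous.inner continuous_id continuous_const) continuous_const
    exact this.measurableSet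
  have hA : MeasurableSet (Ω ∩ H) := hopen.measurableSet.inter hsetH
  have h1 : (μH[(m+1 : ℕ)] : Measure (Esp m)) (Ω ∩ H)
      = (μH[(m+1 : ℕ)] : Measure (Esp' m)) (j ⁻¹' (Ω ∩ H)) := by
    rw [← Measure.map_apply hmeas hA, map_slice b hb t, Measure.restrict_apply hA,
      inter_eq_self_of_subset_left inter_subset_right]
  rw [h1, hc]
  obtain ⟨y₀, hy₀⟩ : ∃ y₀, j y₀ = x₀ := by
    have : x₀ ∈ Set.range j := by rw [hj, Phi_range b hb t]; exact hx₀.2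
    exact this
  have hop : IsOpen (j ⁻¹' (Ω ∩ H) : Set (Esp' m)) := by
    have : j ⁻¹' (Ω ∩ H) = j ⁻¹' Ω := by
      ext y; constructor
      · exact fun h => h.1
      · exact fun h => ⟨h, Phi_inner b hb t y⟩
    rw [this]
    exact hopen.preimage (Phi_isometry b t).continuous
  have hne : (j ⁻¹' (Ω ∩ H)).Nonempty := ⟨y₀, by rw [Set.mem_preimage, hy₀]; exact hx₀⟩
  have hvol : 0 < volume (j ⁻¹' (Ω ∩ H)) := hop.measure_pos volume hne
  rw [Measure.smul_apply]
  exact ENNReal.mul_pos (by simpa using hcpos.ne') hvol.ne'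

lemma exists_onb {m : ℕ} (ξ : Esp m) (hξ : ‖ξ‖ = 1) :
    ∃ b : OrthonormalBasis (Fin (m+2)) ℝ (Esp m), b 0 = ξ := by
  have hcard : Module.finrank ℝ (Esp m) = Fintype.card (Fin (m+2)) := by
    simp [finrank_euclideanSpace_fin]
  have horth : Orthonormal ℝ (({0} : Set (Fin (m+2))).restrict (fun _ => ξ)) := by
    constructor
    · intro i; exact hξ
    · intro i j hij
      exfalso; apply hij; ext
      have hi := i.2; have hj := j.2
      simp only [Set.mem_singleton_iff] at hi hj
      rw [hi, hj]
  obtain ⟨b, hb⟩ := horth.exists_orthonormalBasis_extension_of_card_eq hcard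
  exact ⟨b, hb 0 rfl⟩

theorem stmt12 (n : ℕ) (hn : 2 ≤ n) (Ω : Set (EuclideanSpace ℝ (Fin n)))
    (hopen : IsOpen Ω) (hconv : Convex ℝ Ω) (hbdd : Bornology.IsBounded Ω)
    (hne : Ω.Nonempty)
    (G : ℝ → ℝ) (hGpos : ∀ t ≥ (0:ℝ), 0 < G t)
    (hGloc : ∀ r : ℝ, IntegrableOn G (Icc 0 r))
    (f : EuclideanSpace ℝ (Fin n) → ℝ) (hf : Integrable f)
    (hsupp : ∀ x, x ∉ Ω → f x = 0)
    (hradon : ∀ (ξ : EuclideanSpace ℝ (Fin n)) (t : ℝ), ‖ξ‖ = 1 →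
      0 < μH[(n - 1 : ℕ)] (Ω ∩ {x : EuclideanSpace ℝ (Fin n) | ⟪x, ξ⟫ = t}) →
      ∫ x in Ω ∩ {x : EuclideanSpace ℝ (Fin n) | ⟪x, ξ⟫ = t}, f x ∂μH[(n - 1 : ℕ)]
        = G (min (t - sInf ((fun x => ⟪x, ξ⟫) '' Ω)) (sSup ((fun x => ⟪x, ξ⟫) '' Ω) - t))) :
    ∀ ξ : EuclideanSpace ℝ (Fin n), ‖ξ‖ = 1 →
      ∫ x : EuclideanSpace ℝ (Fin n), ⟪x, ξ⟫ * f x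
        = ((∫ x : EuclideanSpace ℝ (Fin n), f x) / 2) *
          (sSup ((fun x => ⟪x, ξ⟫) '' Ω) + sInf ((fun x => ⟪x, ξ⟫) '' Ω)) := by
  obtain ⟨m, rfl⟩ : ∃ m, n = m + 2 := ⟨n - 2, by omega⟩
  intro ξ hξ
  obtain ⟨b, hb⟩ := exists_onb ξ hξ
  have hradon₁ : ∀ (t : ℝ),
      0 < (μH[(m+1 : ℕ)] : Measure (Esp m)) (Ω ∩ {x : Esp m | ⟪x, ξ⟫ = t}) →
      ∫ x in Ω ∩ {x : Esp m | ⟪x, ξ⟫ = t}, f x ∂(μH[(m+1 : ℕ)])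
        = G (min (t - sInf ((fun x => ⟪x, ξ⟫) '' Ω)) (sSup ((fun x => ⟪x, ξ⟫) '' Ω) - t)) :=
    fun t => hradon ξ t hξ
  set S : Set ℝ := (fun x : Esp m => ⟪x, ξ⟫) '' Ω with hS
  set r₁ : ℝ := sInf S with hr₁
  set r₂ : ℝ := sSup S with hr₂
  -- S facts
  have hSne : S.Nonempty := hne.image _
  obtain ⟨R, hR⟩ := hbdd.subset_closedBall (0 : Esp m)
  have habs : ∀ x ∈ Ω, |⟪x, ξ⟫| ≤ R := by
    intro x hx
    calc |⟪x, ξ⟫| ≤ ‖x‖ * ‖ξ‖ := abs_real_inner_le_norm x ξ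
      _ = ‖x‖ := by rw [hξ, mul_one]
      _ ≤ R := by simpa using hR hx
  have hbddAbove : BddAbove S := by
    refine ⟨R, ?_⟩
    rintro a ⟨x, hx, rfl⟩
    exact (abs_le.mp (habs x hx)).2
  have hbddBelow : BddBelow S := by
    refine ⟨-R, ?_⟩
    rintro a ⟨x, hx, rfl⟩
    exact (abs_le.mp (habs x hx)).1
  have hLcoe : (fun x : Esp m => ⟪x, ξ⟫) = ⇑(innerSL ℝ ξ) := by
    funext x
    rw [innerSL_apply_apply]
    exact real_inner_comm ξ x
  have hLsurj : Function.Surjective ⇑(innerSL ℝ ξ) := by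
    intro r
    refine ⟨r • ξ, ?_⟩
    rw [innerSL_apply_apply, real_inner_smul_right, real_inner_self_eq_norm_sq, hξ]
    norm_num
  have hSopen : IsOpen S := by
    rw [hS, hLcoe]
    exact (innerSL ℝ ξ).isOpenMap hLsurj Ω hopen
  have hslab : ∀ x ∈ Ω, r₁ < ⟪x, ξ⟫ ∧ ⟪x, ξ⟫ < r₂ := by
    intro x hx
    have hmem : ⟪x, ξ⟫ ∈ S := ⟨x, hx, rfl⟩
    obtain ⟨ε, hε, hball⟩ := Metric.isOpen_iff.mp hSopen _ hmem
    have h₁ : ⟪x, ξ⟫ - ε / 2 ∈ S := hball (by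
      rw [Metric.mem_ball, Real.dist_eq,
        show ⟪x, ξ⟫ - ε / 2 - ⟪x, ξ⟫ = -(ε / 2) by ring, abs_neg,
        abs_of_pos (half_pos hε)]
      linarith)
    have h₂ : ⟪x, ξ⟫ + ε / 2 ∈ S := hball (by
      rw [Metric.mem_ball, Real.dist_eq,
        show ⟪x, ξ⟫ + ε / 2 - ⟪x, ξ⟫ = ε / 2 by ring,
        abs_of_pos (half_pos hε)]
      linarith)
    constructor
    · have := csInf_le hbddBelow h₁; linarith
    · have := le_csSup hbddAbove h₂; linarith
  have hr12 : r₁ < r₂ := by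
    obtain ⟨x, hx⟩ := hne
    have := hslab x hx
    linarith [this.1, this.2]
  obtain ⟨c, hcpos, hc⟩ := nu_eq_smul m
  have hcne : (c.toReal : ℝ) ≠ 0 := by positivity
  set F : ℝ → ℝ := fun t => ∫ y : Esp' m, f (Phi b (t, y)) with hF
  -- slice points
  have hpoint : ∀ t ∈ Ioo r₁ r₂, ∃ x₀, x₀ ∈ Ω ∩ {x : Esp m | ⟪x, ξ⟫ = t} := by
    rintro t ⟨ht₁, ht₂⟩
    obtain ⟨a, ⟨xa, hxa, rfl⟩, ha⟩ := exists_lt_of_csInf_lt hSne ht₁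
    obtain ⟨bb, ⟨xb, hxb, rfl⟩, hbb⟩ := exists_lt_of_lt_csSup hSne ht₂
    dsimp only at ha hbb
    set lam : ℝ := (t - ⟪xa, ξ⟫) / (⟪xb, ξ⟫ - ⟪xa, ξ⟫) with hlam
    have hab : ⟪xa, ξ⟫ < ⟪xb, ξ⟫ := lt_trans ha hbb
    have hlam₀ : 0 ≤ lam := by
      apply div_nonneg <;> linarith
    have hlam₁ : lam ≤ 1 := by
      rw [hlam, div_le_one (by linarith)]; linarith
    have key2 : ∀ α β : ℝ, α < β →
        (1 - (t - α) / (β - α)) * α + (t - α) / (β - α) * β = t := by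
      intro α β h
      have hne0 : β - α ≠ 0 := sub_ne_zero.mpr h.ne'
      field_simp
      ring
    refine ⟨(1 - lam) • xa + lam • xb, hconv hxa hxb (by linarith) hlam₀ (by ring), ?_⟩
    show ⟪(1 - lam) • xa + lam • xb, ξ⟫ = t
    rw [inner_add_left, real_inner_smul_left, real_inner_smul_left, hlam]
    exact key2 _ _ hab
  have hradon' : ∀ t ∈ Ioo r₁ r₂, c.toReal * F t = G (min (t - r₁) (r₂ - t)) := by
    intro t ht
    obtain ⟨x₀, hx₀⟩ := hpoint t ht
    rw [← slice_integral b hb Ω hopen f hsupp c hc t]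
    exact hradon₁ t (slice_pos b hb Ω hopen c hcpos hc t x₀ hx₀)
  have hFout : ∀ t, t ∉ Ioo r₁ r₂ → F t = 0 := by
    intro t ht
    have hz : ∀ y : Esp' m, f (Phi b (t, y)) = 0 := by
      intro y
      apply hsupp
      intro hmem
      apply ht
      have := hslab _ hmem
      rw [Phi_inner b hb t y] at this
      exact this
    simp only [hF, hz, integral_zero]
  have hFsym : ∀ t, F (r₁ + r₂ - t) = F t := by
    intro t
    by_cases ht : t ∈ Ioo r₁ r₂
    · have hs : r₁ + r₂ - t ∈ Ioo r₁ r₂ := by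
        obtain ⟨h1, h2⟩ := ht
        exact ⟨by linarith, by linarith⟩
      have h1 := hradon' t ht
      have h2 := hradon' _ hs
      have hmin : min (r₁ + r₂ - t - r₁) (r₂ - (r₁ + r₂ - t)) = min (t - r₁) (r₂ - t) := by
        rw [min_comm]
        congr 1 <;> ring
      rw [hmin] at h2
      exact mul_left_cancel₀ hcne (h2.trans h1.symm)
    · have hs : r₁ + r₂ - t ∉ Ioo r₁ r₂ := by
        simp only [mem_Ioo, not_and_or, not_lt] at ht ⊢
        rcases ht with h | h
        · right; linarith
        · left; linarith
      rw [hFout _ hs, hFout _ ht]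
  -- integrability of the moment integrand
  have hgi : Integrable (fun x : Esp m => ⟪x, ξ⟫ * f x) := by
    have heq : (fun x : Esp m => ⟪x, ξ⟫ * f x)
        = fun x => (Ω.indicator (fun x : Esp m => ⟪x, ξ⟫) x) * f x := by
      funext x
      by_cases hx : x ∈ Ω
      · rw [Set.indicator_of_mem hx]
      · rw [Set.indicator_of_notMem hx, hsupp x hx, mul_zero, mul_zero]
    rw [heq]
    apply hf.bdd_mul (c := max R 0)
    · exact ((Continuous.inner continuous_id continuous_const).aestronglyMeasurable).indicator
        hopen.measurableSet
    · refine Filter.Eventually.of_forall (fun x => ?_)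
      by_cases hx : x ∈ Ω
      · rw [Set.indicator_of_mem hx]
        exact le_max_of_le_left (habs x hx)
      · rw [Set.indicator_of_notMem hx]
        simpa using le_max_right R 0
  -- Fubini
  have hfΦ : Integrable (fun p : ℝ × Esp' m => f (Phi b p)) (volume.prod volume) := by
    rw [← Measure.volume_eq_prod]
    exact ((Phi_mp b).integrable_comp_emb (Phi b).measurableEmbedding).mpr hf
  have hgΦ : Integrable (fun p : ℝ × Esp' m => ⟪Phi b p, ξ⟫ * f (Phi b p)) (volume.prod volume) := by
    rw [← Measure.volume_eq_prod]
    exact ((Phi_mp b).integrable_comp_emb (Phi b).measurableEmbedding).mpr hgi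
  have hK : ∫ x, f x = ∫ t, F t := by
    calc ∫ x, f x = ∫ p : ℝ × Esp' m, f (Phi b p) := ((Phi_mp b).integral_comp' f).symm
      _ = ∫ p : ℝ × Esp' m, f (Phi b p) ∂(volume.prod volume) := by rw [← Measure.volume_eq_prod]
      _ = ∫ t, ∫ y, f (Phi b (t, y)) := integral_prod _ hfΦ
  have hg : ∫ x, ⟪x, ξ⟫ * f x = ∫ t, t * F t := by
    calc ∫ x, ⟪x, ξ⟫ * f x = ∫ p : ℝ × Esp' m, ⟪Phi b p, ξ⟫ * f (Phi b p) :=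
          ((Phi_mp b).integral_comp' _).symm
      _ = ∫ p : ℝ × Esp' m, ⟪Phi b p, ξ⟫ * f (Phi b p) ∂(volume.prod volume) := by
          rw [← Measure.volume_eq_prod]
      _ = ∫ t, ∫ y, ⟪Phi b (t, y), ξ⟫ * f (Phi b (t, y)) := integral_prod _ hgΦ
      _ = ∫ t, t * F t := by
          congr 1
          funext t
          simp only [Phi_inner b hb]
          rw [integral_const_mul]
  have hFint : Integrable F := hfΦ.integral_prod_left
  have htFint : Integrable (fun t => t * F t) := by
    have h := hgΦ.integral_prod_left
    have heq : (fun t => ∫ y, ⟪Phi b (t, y), ξ⟫ * f (Phi b (t, y))) = fun t => t * F t := by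
      funext t
      simp only [Phi_inner b hb]
      rw [integral_const_mul]
    rwa [heq] at h
  -- reflection
  have hrefl : ∀ φ : ℝ → ℝ, ∫ t, φ (r₁ + r₂ - t) = ∫ t, φ t := by
    intro φ
    have h1 : ∫ t : ℝ, φ (r₁ + r₂ + -t) = ∫ t : ℝ, φ (r₁ + r₂ + t) :=
      integral_neg_eq_self (fun s => φ (r₁ + r₂ + s)) volume
    have h2 : ∫ t : ℝ, φ (r₁ + r₂ + t) = ∫ t, φ t := integral_add_left_eq_self φ (r₁ + r₂)
    simpa only [sub_eq_add_neg] using h1.trans h2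
  have key : ∫ t, t * F t = ∫ t, (r₁ + r₂ - t) * F t := by
    calc ∫ t, t * F t = ∫ t, (r₁ + r₂ - t) * F (r₁ + r₂ - t) :=
          (hrefl (fun u => u * F u)).symm
      _ = ∫ t, (r₁ + r₂ - t) * F t := by simp_rw [hFsym]
  have expand : ∫ t, (r₁ + r₂ - t) * F t = (r₁ + r₂) * (∫ t, F t) - ∫ t, t * F t := by
    have : (fun t => (r₁ + r₂ - t) * F t) = fun t => (r₁ + r₂) * F t - t * F t := by
      funext t; ring
    rw [this, integral_sub (hFint.const_mul _) htFint, integral_const_mul]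
  rw [hg, hK]
  have : ∫ t, t * F t = (r₁ + r₂) * (∫ t, F t) - ∫ t, t * F t := key.trans expand
  have hgoal : ∫ t, t * F t = ((∫ t, F t) / 2) * (r₂ + r₁) := by linarith
  exact hgoal

end
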